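/- Let ρ : F₂ → Isom(X) be a group homomorphism from the free group on two generators to the isometry group of a metric space X. If there exist constants C > 0 and D ≥ 0 such that l_S(ρ(γ)) ≥ ‖γ‖/C − D for every primitive element γ ∈ F₂, then in fact l_S(ρ(γ)) ≥ ‖γ‖/C for every primitive γ ∈ F₂ (the additive constant D can be removed without changing the multiplicative constant C). -/

import Mathlib

open Metric Filter Set Topology

/-- The Gromov product `(x|y)_z = ½(d(z,x)+d(z,y)−d(x,y))`. -/
noncomputable def gromovProd {X : Type*} [MetricSpace X] (x y z : X) : ℝ :=
  (dist z x + dist z y - dist x y) / 2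

/-- A parametrized geodesic segment from `x` to `y` (defined on `[0, dist x y]`). -/
def IsGeodesicSegment {X : Type*} [MetricSpace X] (x y : X) (f : ℝ → X) : Prop :=
  f 0 = x ∧ f (dist x y) = y ∧
    ∀ s ∈ Set.Icc (0 : ℝ) (dist x y), ∀ t ∈ Set.Icc (0 : ℝ) (dist x y),
      dist (f s) (f t) = |s - t|

/-- The metric space `X` is geodesic: any two points are joined by a geodesic segment. -/
def GeodesicMetricSpace (X : Type*) [MetricSpace X] : Prop :=
  ∀ x y : X, ∃ f : ℝ → X, IsGeodesicSegment x y f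

/-- `X` is δ-hyperbolic in the sense of Rips: every geodesic triangle is δ-thin,
i.e. each side is contained in the δ-neighbourhood of the union of the other two. -/
def RipsHyperbolic (X : Type*) [MetricSpace X] (δ : ℝ) : Prop :=
  ∀ (x y z : X) (f g h : ℝ → X),
    IsGeodesicSegment x y f → IsGeodesicSegment y z g → IsGeodesicSegment z x h →
      ∀ s ∈ Set.Icc (0 : ℝ) (dist x y),
        infDist (f s) (g '' Set.Icc 0 (dist y z) ∪ h '' Set.Icc 0 (dist z x)) ≤ δ

/-- A (parametrized) geodesic line in `X`. -/
def IsGeodesicLine {X : Type*} [MetricSpace X] (L : ℝ → X) : Prop :=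
  ∀ s t : ℝ, dist (L s) (L t) = |s - t|

/-- A (parametrized) geodesic ray in `X` (parametrized on `[0,∞)`). -/
def IsGeodesicRay {X : Type*} [MetricSpace X] (r : ℝ → X) : Prop :=
  ∀ s t : ℝ, 0 ≤ s → 0 ≤ t → dist (r s) (r t) = |s - t|

/-- `L` is a geodesic from `A⁻` to `A⁺` (oriented toward `A⁺`): it is a geodesic line
such that, with `x₀ = L 0`, the Gromov products `(Aⁿx₀ | L t)_{x₀}` tend to `+∞` as
`min(n,t) → +∞`, and `(A⁻ⁿx₀ | L (−t))_{x₀}` tend to `+∞` as `min(n,t) → +∞`. -/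
def IsGeodesicFromTo {X : Type*} [MetricSpace X] (A : X ≃ᵢ X) (L : ℝ → X) : Prop :=
  IsGeodesicLine L ∧
    (∀ M : ℝ, ∃ N : ℝ, ∀ (n : ℕ) (t : ℝ), N ≤ (n : ℝ) → N ≤ t →
      M ≤ gromovProd ((A ^ n) (L 0)) (L t) (L 0)) ∧
    (∀ M : ℝ, ∃ N : ℝ, ∀ (n : ℕ) (t : ℝ), N ≤ (n : ℝ) → N ≤ t →
      M ≤ gromovProd ((A⁻¹ ^ n) (L 0)) (L (-t)) (L 0))

/-- An element of `F₂` is primitive if it is the image of a generator under an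
automorphism of `F₂` (equivalently, it belongs to some free basis). -/
def Primitive (γ : FreeGroup (Fin 2)) : Prop :=
  ∃ φ : FreeGroup (Fin 2) ≃* FreeGroup (Fin 2), φ (FreeGroup.of 0) = γ

/-- The (reduced) word length of an element of `F₂`. -/
noncomputable def wordLength (γ : FreeGroup (Fin 2)) : ℕ := γ.toWord.length

/-- The cyclically reduced word length `‖γ‖`: the minimum of the word lengths
of the conjugates of `γ`. -/
noncomputable def cycLength (γ : FreeGroup (Fin 2)) : ℕ :=
  sInf (Set.range fun g : FreeGroup (Fin 2) => wordLength (g * γ * g⁻¹))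

/-- `γ` is cyclically reduced if its word length equals its cyclically reduced length. -/
def CyclicallyReduced (γ : FreeGroup (Fin 2)) : Prop :=
  wordLength γ = cycLength γ


/- ======================  Auxiliary development  ====================== -/

namespace BowditchAux

open FreeGroup List

abbrev Letter := (Fin 2) × Bool

/-- The inverse letter. -/
def neg (p : Letter) : Letter := (p.1, !p.2)

@[simp] lemma neg_neg (p : Letter) : neg (neg p) = p := by
  obtain ⟨x, b⟩ := p; simp [neg]

lemma ne_neg_self (p : Letter) : p ≠ neg p := by
  obtain ⟨x, b⟩ := p
  simp only [neg, Prod.mk.injEq, ne_eq, not_and]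
  intro _; simp

/-- Non-cancelling adjacency. -/
def NC (p q : Letter) : Prop := q ≠ neg p

/-- A word is reduced. -/
def Rd (L : List Letter) : Prop := List.IsChain NC L

lemma rd_nil : Rd [] := List.isChain_nil

lemma Rd.append {L₁ L₂ : List Letter} (h₁ : Rd L₁) (h₂ : Rd L₂)
    (h : ∀ p ∈ L₁.getLast?, ∀ q ∈ L₂.head?, NC p q) : Rd (L₁ ++ L₂) :=
  List.isChain_append.mpr ⟨h₁, h₂, h⟩

lemma Rd.infix {L₁ L : List Letter} (h : Rd L) (h' : L₁ <:+: L) : Rd L₁ :=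
  List.IsChain.infix h h'

lemma Rd.prefix {L₁ L : List Letter} (h : Rd L) (h' : L₁ <+: L) : Rd L₁ :=
  List.IsChain.prefix h h'

lemma exists_decomp_of_not_rd : ∀ {L : List Letter}, ¬ Rd L →
    ∃ (L₂ L₃ : List Letter) (x : Fin 2) (b : Bool), L = L₂ ++ (x, b) :: (x, !b) :: L₃ := by
  intro L
  induction L with
  | nil => intro h; exact absurd List.isChain_nil h
  | cons p t ih =>
    intro h
    rcases t with _ | ⟨q, t'⟩
    · exact absurd (List.isChain_singleton p) h
    · by_cases hpq : NC p q
      · have ht : ¬ Rd (q :: t') := by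
          intro hc
          exact h (List.isChain_cons_cons.mpr ⟨hpq, hc⟩)
        obtain ⟨L₂, L₃, x, b, hd⟩ := ih ht
        exact ⟨p :: L₂, L₃, x, b, by rw [hd]; rfl⟩
      · simp only [NC, ne_eq, not_not] at hpq
        obtain ⟨x, b⟩ := p
        refine ⟨[], t', x, b, ?_⟩
        rw [hpq]; rfl

lemma rd_toWord (w : FreeGroup (Fin 2)) : Rd w.toWord := by
  by_contra h
  obtain ⟨L₂, L₃, x, b, hd⟩ := exists_decomp_of_not_rd h
  exact FreeGroup.reduce.not (L₁ := w.toWord) (L₂ := L₂) (L₃ := L₃) (x := x) (b := b)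
    (by rw [FreeGroup.reduce_toWord, hd])

lemma reduce_eq_self_of_rd : ∀ {L : List Letter}, Rd L → FreeGroup.reduce L = L := by
  intro L
  induction L with
  | nil => intro _; rfl
  | cons p t ih =>
    intro h
    have ht : Rd t := List.IsChain.tail h
    rw [FreeGroup.reduce.cons p, ih ht]
    rcases t with _ | ⟨q, t'⟩
    · rfl
    · have hpq : NC p q := (List.isChain_cons_cons.mp h).1
      have hcond : ¬ (p.1 = q.1 ∧ p.2 = !q.2) := by
        rintro ⟨h1, h2⟩
        apply hpq
        obtain ⟨x, b⟩ := p; obtain ⟨y, c⟩ := q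
        simp only at h1 h2
        subst h1; subst h2
        simp [neg]
      simp only [hcond, if_false]

lemma toWord_mk_of_rd {L : List Letter} (h : Rd L) : (FreeGroup.mk L).toWord = L := by
  rw [FreeGroup.toWord_mk, reduce_eq_self_of_rd h]

lemma wordLength_mk_of_rd {L : List Letter} (h : Rd L) :
    wordLength (FreeGroup.mk L) = L.length := by
  rw [wordLength, toWord_mk_of_rd h]

lemma wordLength_mk_le (L : List Letter) : wordLength (FreeGroup.mk L) ≤ L.length := by
  rw [wordLength, FreeGroup.toWord_mk]
  exact FreeGroup.Red.length_le FreeGroup.reduce.red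

lemma invRev_eq (L : List Letter) : FreeGroup.invRev L = (L.map neg).reverse := rfl

lemma invRev_append (L₁ L₂ : List Letter) :
    FreeGroup.invRev (L₁ ++ L₂) = FreeGroup.invRev L₂ ++ FreeGroup.invRev L₁ := by
  simp [invRev_eq]

lemma invRev_singleton (p : Letter) : FreeGroup.invRev [p] = [neg p] := rfl

lemma head?_invRev (L : List Letter) : (FreeGroup.invRev L).head? = L.getLast?.map neg := by
  rw [invRev_eq, List.head?_reverse, List.getLast?_map]

lemma rd_invRev {L : List Letter} (h : Rd L) : Rd (FreeGroup.invRev L) := by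
  rw [Rd, invRev_eq, List.isChain_reverse, List.isChain_map]
  apply List.IsChain.imp ?_ h
  intro a b hab
  show NC (neg b) (neg a)
  intro hh
  rw [neg_neg] at hh
  exact hab hh.symm

lemma mk_cancel (L₁ L₂ : List Letter) (p : Letter) :
    FreeGroup.mk (L₁ ++ p :: neg p :: L₂) = FreeGroup.mk (L₁ ++ L₂) := by
  obtain ⟨x, b⟩ := p
  rw [← FreeGroup.quot_mk_eq_mk, ← FreeGroup.quot_mk_eq_mk]
  exact Quot.sound FreeGroup.Red.Step.not

/-- Cancellation lemma for the product of two reduced words. -/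
lemma cancel_lemma (L₁ : List Letter) : ∀ (L₂ : List Letter), Rd L₁ → Rd L₂ →
    ∃ A B S : List Letter, L₁ = A ++ S ∧ L₂ = FreeGroup.invRev S ++ B ∧ Rd (A ++ B) ∧
      FreeGroup.mk L₁ * FreeGroup.mk L₂ = FreeGroup.mk (A ++ B) := by
  induction L₁ using List.reverseRecOn with
  | nil =>
    intro L₂ _ h₂
    exact ⟨[], L₂, [], by simp, by simp [FreeGroup.invRev], by simpa using h₂,
      by rw [← FreeGroup.one_eq_mk, one_mul]; rfl⟩
  | append_singleton I x ihI =>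
    intro L₂ h₁ h₂
    rcases L₂ with _ | ⟨y, T⟩
    · refine ⟨I ++ [x], [], [], by simp, by simp [FreeGroup.invRev], by simpa using h₁, ?_⟩
      rw [← FreeGroup.one_eq_mk, mul_one, List.append_nil]
    · by_cases hc : y = neg x
      · have hI : Rd I := h₁.prefix ⟨[x], rfl⟩
        have hT : Rd T := List.IsChain.tail h₂
        obtain ⟨A, B, S, e₁, e₂, hrd, hmk⟩ := ihI T hI hT
        refine ⟨A, B, S ++ [x], by rw [e₁, List.append_assoc], ?_, hrd, ?_⟩
        · rw [invRev_append, invRev_singleton, e₂, hc]; simp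
        · have e3 : FreeGroup.mk (I ++ [x]) * FreeGroup.mk (y :: T)
              = FreeGroup.mk (I ++ x :: neg x :: T) := by
            rw [FreeGroup.mul_mk, hc]
            congr 1
            simp
          rw [e3, mk_cancel, ← FreeGroup.mul_mk, hmk]
      · refine ⟨I ++ [x], y :: T, [], by simp, by simp [FreeGroup.invRev], ?_,
          by rw [FreeGroup.mul_mk]⟩
        refine h₁.append h₂ ?_
        intro p hp q hq
        rw [List.getLast?_concat] at hp
        simp only [List.head?_cons, Option.mem_some_iff] at hp hq
        subst hp; subst hq
        exact fun hh => hc hh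

/-- Key conjugation lemma: a cyclically reduced word is shortest in its conjugacy class. -/
lemma conj_lemma (G : List Letter) : ∀ (c : List Letter), Rd G → Rd (c ++ c) →
    c.length ≤ wordLength (FreeGroup.mk G * FreeGroup.mk c * (FreeGroup.mk G)⁻¹) := by
  induction G using List.reverseRecOn with
  | nil =>
    intro c _ hcc
    have hc : Rd c := hcc.prefix ⟨c, rfl⟩
    rw [← FreeGroup.one_eq_mk, one_mul, inv_one, mul_one, wordLength_mk_of_rd hc]
  | append_singleton G' x ih =>
    intro c hG hcc
    rcases c with _ | ⟨h, t⟩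
    · simpa using Nat.zero_le _
    have hG' : Rd G' := hG.prefix ⟨[x], rfl⟩
    obtain ⟨hc, _, hj⟩ := List.isChain_append.mp hcc
    have hccc : Rd (((h :: t) ++ (h :: t)) ++ (h :: t)) := by
      refine Rd.append hcc hc ?_
      intro p hp q hq
      refine hj p ?_ q hq
      rwa [List.getLast?_append_of_ne_nil _ (List.cons_ne_nil _ _)] at hp
    by_cases h1 : h = neg x
    · -- the last letter of G cancels the first letter of c
      have e : FreeGroup.mk (G' ++ [x]) * FreeGroup.mk (h :: t) * (FreeGroup.mk (G' ++ [x]))⁻¹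
          = FreeGroup.mk G' * FreeGroup.mk (t ++ [h]) * (FreeGroup.mk G')⁻¹ := by
        rw [FreeGroup.inv_mk, FreeGroup.inv_mk, invRev_append, invRev_singleton,
          FreeGroup.mul_mk, FreeGroup.mul_mk, FreeGroup.mul_mk, FreeGroup.mul_mk]
        have e1 : (G' ++ [x]) ++ (h :: t) ++ ([neg x] ++ FreeGroup.invRev G')
            = G' ++ x :: neg x :: (t ++ neg x :: FreeGroup.invRev G') := by
          rw [← h1]
          simp
        have e2 : G' ++ (t ++ [h]) ++ FreeGroup.invRev G'
            = G' ++ (t ++ neg x :: FreeGroup.invRev G') := by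
          rw [← h1]; simp
        rw [e1, mk_cancel, e2]
      have hrot : Rd ((t ++ [h]) ++ (t ++ [h])) := by
        refine hccc.infix ⟨[h], t, ?_⟩
        simp
      have hlen : (t ++ [h]).length = (h :: t).length := by simp
      rw [e]
      rw [← hlen]
      exact ih (t ++ [h]) hG' hrot
    · have hne : (h :: t) ≠ [] := List.cons_ne_nil _ _
      set l := (h :: t).getLast hne with hl
      have hcl : (h :: t) = (h :: t).dropLast ++ [l] :=
        (List.dropLast_append_getLast hne).symm
      by_cases h2 : x = l
      · -- the last letter of c cancels the first letter of G⁻¹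
        have e : FreeGroup.mk (G' ++ [x]) * FreeGroup.mk (h :: t) * (FreeGroup.mk (G' ++ [x]))⁻¹
            = FreeGroup.mk G' * FreeGroup.mk (l :: (h :: t).dropLast) * (FreeGroup.mk G')⁻¹ := by
          rw [FreeGroup.inv_mk, FreeGroup.inv_mk, invRev_append, invRev_singleton,
            FreeGroup.mul_mk, FreeGroup.mul_mk, FreeGroup.mul_mk, FreeGroup.mul_mk]
          have e1 : (G' ++ [x]) ++ (h :: t) ++ ([neg x] ++ FreeGroup.invRev G')
              = (G' ++ [x] ++ (h :: t).dropLast) ++ l :: neg l :: FreeGroup.invRev G' := by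
            conv_lhs => rw [hcl]
            rw [h2]
            simp
          have e2 : (G' ++ [x] ++ (h :: t).dropLast) ++ FreeGroup.invRev G'
              = G' ++ (l :: (h :: t).dropLast) ++ FreeGroup.invRev G' := by
            rw [h2]; simp
          rw [e1, mk_cancel, e2]
        have hrot : Rd ((l :: (h :: t).dropLast) ++ (l :: (h :: t).dropLast)) := by
          refine hccc.infix ⟨(h :: t).dropLast, [l], ?_⟩
          conv_rhs => rw [hcl]
          simp
        have hlen : (l :: (h :: t).dropLast).length = (h :: t).length := by
          rw [List.length_cons, List.length_dropLast]
          simp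
        rw [e, ← hlen]
        exact ih _ hG' hrot
      · -- no cancellation at all: the conjugate is reduced as written
        obtain ⟨_, _, hjG⟩ := List.isChain_append.mp (show Rd (G' ++ [x]) from hG)
        have hneg_inj : ∀ p q : Letter, neg p = neg q → p = q := by
          intro p q hpq
          have := congrArg neg hpq
          rwa [neg_neg, neg_neg] at this
        have hrdW : Rd ((G' ++ [x]) ++ ((h :: t) ++ ([neg x] ++ FreeGroup.invRev G'))) := by
          refine hG.append ?_ ?_
          · refine hc.append ?_ ?_
            · refine (List.isChain_singleton (neg x)).append (rd_invRev hG') ?_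
              intro p hp q hq
              rw [List.getLast?_singleton, Option.mem_def, Option.some_inj] at hp
              subst hp
              rw [head?_invRev, Option.mem_def, Option.map_eq_some_iff] at hq
              obtain ⟨pg, hpg, rfl⟩ := hq
              have hNCpgx : NC pg x := hjG pg hpg x (by simp)
              intro hcontra
              exact hNCpgx (by rw [hneg_inj pg (neg x) hcontra, neg_neg])
            · intro p hp q hq
              rw [show (h :: t).getLast? = some l from List.getLast?_eq_getLast hne,
                Option.mem_def, Option.some_inj] at hp
              rw [show ([neg x] ++ FreeGroup.invRev G').head? = some (neg x) from rfl,
                Option.mem_def, Option.some_inj] at hq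
              subst hp; subst hq
              intro hcontra
              exact h2 (hneg_inj _ _ hcontra.symm).symm
          · intro p hp q hq
            rw [List.getLast?_concat, Option.mem_def, Option.some_inj] at hp
            rw [show ((h :: t) ++ ([neg x] ++ FreeGroup.invRev G')).head? = some h from rfl,
              Option.mem_def, Option.some_inj] at hq
            subst hp; subst hq
            exact h1
        have e : FreeGroup.mk (G' ++ [x]) * FreeGroup.mk (h :: t) * (FreeGroup.mk (G' ++ [x]))⁻¹
            = FreeGroup.mk ((G' ++ [x]) ++ ((h :: t) ++ ([neg x] ++ FreeGroup.invRev G'))) := by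
          rw [FreeGroup.inv_mk, invRev_append, invRev_singleton,
            FreeGroup.mul_mk, FreeGroup.mul_mk]
          congr 1
          simp
        rw [e, wordLength_mk_of_rd hrdW]
        simp only [List.length_append, List.length_cons, List.length_singleton,
          FreeGroup.invRev_length]
        omega

/- ----------  cycLength lemmas ---------- -/

lemma cycLength_le (w g : FreeGroup (Fin 2)) : cycLength w ≤ wordLength (g * w * g⁻¹) :=
  Nat.sInf_le ⟨g, rfl⟩

lemma cycLength_le_wordLength (w : FreeGroup (Fin 2)) : cycLength w ≤ wordLength w := by
  have := cycLength_le w 1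
  simpa using this

lemma exists_cycLength (w : FreeGroup (Fin 2)) :
    ∃ g, wordLength (g * w * g⁻¹) = cycLength w :=
  Nat.sInf_mem (Set.range_nonempty _)

lemma cycLength_conj (g w : FreeGroup (Fin 2)) : cycLength (g * w * g⁻¹) = cycLength w := by
  unfold cycLength
  congr 1
  ext n
  simp only [Set.mem_range]
  constructor
  · rintro ⟨g', rfl⟩
    exact ⟨g' * g, by rw [show g' * g * w * (g' * g)⁻¹ = g' * (g * w * g⁻¹) * g'⁻¹ by group]⟩
  · rintro ⟨g', rfl⟩
    exact ⟨g' * g⁻¹, by rw [show g' * g⁻¹ * (g * w * g⁻¹) * (g' * g⁻¹)⁻¹ = g' * w * g'⁻¹ by group]⟩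

lemma cycLength_eq_of_unpeelable {W : List Letter} (h : Rd (W ++ W)) :
    cycLength (FreeGroup.mk W) = W.length := by
  have hW : Rd W := h.prefix ⟨W, rfl⟩
  apply Nat.le_antisymm
  · calc cycLength (FreeGroup.mk W) ≤ wordLength (FreeGroup.mk W) := cycLength_le_wordLength _
      _ = W.length := wordLength_mk_of_rd hW
  · obtain ⟨g, hg⟩ := exists_cycLength (FreeGroup.mk W)
    rw [← hg]
    have := conj_lemma g.toWord W (rd_toWord g) h
    rwa [FreeGroup.mk_toWord] at this

/- ----------  periodic words ---------- -/

/-- The `k`-th letter of the periodic bi-infinite word with period `c`. -/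
def cw (c : List Letter) (k : ℕ) : Letter := c.getD (k % c.length) default

/-- The segment `[i, i+a)` of the periodic word. -/
def seg (c : List Letter) (i a : ℕ) : List Letter := (List.range a).map fun j => cw c (i + j)

@[simp] lemma length_seg (c : List Letter) (i a : ℕ) : (seg c i a).length = a := by
  simp [seg]

lemma seg_zero (c : List Letter) (i : ℕ) : seg c i 0 = [] := rfl

lemma seg_succ_left (c : List Letter) (i a : ℕ) :
    seg c i (a + 1) = cw c i :: seg c (i + 1) a := by
  simp only [seg, List.range_succ_eq_map, List.map_cons, List.map_map, Nat.add_zero]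
  congr 1
  apply List.map_congr_left
  intro j _
  simp only [Function.comp_apply]
  congr 1
  omega

lemma seg_succ_right (c : List Letter) (i a : ℕ) :
    seg c i (a + 1) = seg c i a ++ [cw c (i + a)] := by
  simp [seg, List.range_succ]

lemma seg_append (c : List Letter) (i a b : ℕ) :
    seg c i (a + b) = seg c i a ++ seg c (i + a) b := by
  induction b with
  | zero => simp [seg_zero]
  | succ b ihb =>
    rw [show a + (b + 1) = (a + b) + 1 by omega, seg_succ_right, ihb, seg_succ_right,
      List.append_assoc, show i + (a + b) = i + a + b by omega]

lemma cw_add_length (c : List Letter) (k : ℕ) : cw c (k + c.length) = cw c k := by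
  simp [cw, Nat.add_mod_right]

lemma seg_shift (c : List Letter) (i a : ℕ) : seg c (i + c.length) a = seg c i a := by
  simp only [seg]
  apply List.map_congr_left
  intro j _
  rw [show i + c.length + j = (i + j) + c.length by omega, cw_add_length]

lemma seg_base (c : List Letter) : seg c 0 c.length = c := by
  apply List.ext_getElem (by simp)
  intro n h1 h2
  simp only [seg, List.getElem_map, List.getElem_range, Nat.zero_add]
  rw [cw, Nat.mod_eq_of_lt (by simpa using h1), List.getD_eq_getElem]

lemma seg_mul (c : List Letter) (n : ℕ) : seg c (n * c.length) c.length = c := by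
  induction n with
  | zero => simpa using seg_base c
  | succ n ihn =>
    rw [show (n + 1) * c.length = n * c.length + c.length by ring, seg_shift, ihn]

lemma pow_mk_eq_seg (c : List Letter) (n : ℕ) :
    (FreeGroup.mk c) ^ n = FreeGroup.mk (seg c 0 (n * c.length)) := by
  induction n with
  | zero => rw [pow_zero, Nat.zero_mul, seg_zero, FreeGroup.one_eq_mk]
  | succ n ihn =>
    rw [pow_succ, ihn, FreeGroup.mul_mk]
    congr 1
    rw [show (n + 1) * c.length = n * c.length + c.length by ring, seg_append]
    congr 1
    rw [show 0 + n * c.length = n * c.length by omega, seg_mul]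

lemma cw_adj (u : List Letter) (hc : u ≠ []) (hcc : Rd (u ++ u)) (k : ℕ) :
    NC (cw u k) (cw u (k + 1)) := by
  have hlen : 0 < u.length := List.length_pos_iff.mpr hc
  have hcc' := List.isChain_iff_getElem.mp hcc
  have hrlt : k % u.length < u.length := Nat.mod_lt _ hlen
  have hlt2 : k % u.length + 1 < (u ++ u).length := by
    simp only [List.length_append]; omega
  have key := hcc' (k % u.length) hlt2
  rw [List.getElem_append_left hrlt] at key
  have e1 : cw u k = u[k % u.length] := by
    rw [cw, List.getD_eq_getElem _ _ hrlt]
  rw [e1]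
  by_cases hcase : k % u.length + 1 = u.length
  · have hmod : (k + 1) % u.length = 0 := by
      rw [← Nat.mod_add_mod, hcase, Nat.mod_self]
    have e2 : cw u (k + 1) = u[0]'hlen := by
      rw [cw, hmod, List.getD_eq_getElem _ _ hlen]
    rw [e2]
    have e3 : (u ++ u)[k % u.length + 1]'(by simp only [List.length_append]; omega)
        = u[0]'hlen := by
      rw [List.getElem_append_right (by omega)]
      congr 1
      omega
    rw [e3] at key
    exact key
  · have hmod : (k + 1) % u.length = k % u.length + 1 := by
      rw [← Nat.mod_add_mod, Nat.mod_eq_of_lt (by omega)]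
    have e2 : cw u (k + 1) = u[k % u.length + 1]'(by omega) := by
      have estep : cw u (k + 1) = u.getD (k % u.length + 1) default := by rw [cw, hmod]
      rw [estep]
      exact List.getD_eq_getElem _ _ (by omega)
    rw [e2]
    have e3 : (u ++ u)[k % u.length + 1]'(by simp only [List.length_append]; omega)
        = u[k % u.length + 1]'(by omega) := by
      rw [List.getElem_append_left (by omega)]
    rw [e3] at key
    exact key

lemma rd_seg (c : List Letter) (hc : c ≠ []) (hcc : Rd (c ++ c)) (i a : ℕ) :
    Rd (seg c i a) := by
  rw [Rd, seg, List.isChain_map]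
  rcases a with _ | a
  · simp
  · rw [List.isChain_range_succ]
    intro m hm
    rw [show i + (m + 1) = (i + m) + 1 by omega]
    exact cw_adj c hc hcc (i + m)

/- ----------  the parity argument ---------- -/

lemma par (c : List Letter) (hc : c ≠ []) (hcc : Rd (c ++ c)) (M s : ℕ)
    (hMs : 2 * M ≤ s)
    (hcond : ∀ m, M ≤ m → m < M + c.length → cw c m = neg (cw c (s - m))) : False := by
  have hlen : 0 < c.length := List.length_pos_iff.mpr hc
  have hext : ∀ m, M ≤ m → 2 * m ≤ s + 1 → cw c m = neg (cw c (s - m)) := by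
    intro m
    induction m using Nat.strong_induction_on with
    | _ m ihm =>
      intro hMm hm
      by_cases hsmall : m < M + c.length
      · exact hcond m hMm hsmall
      · push_neg at hsmall
        have hm_le_s : m ≤ s := by omega
        have h1 : cw c m = cw c (m - c.length) := by
          conv_lhs => rw [show m = (m - c.length) + c.length by omega]
          rw [cw_add_length]
        have h2 := ihm (m - c.length) (by omega) (by omega) (by omega)
        rw [h1, h2, show s - (m - c.length) = (s - m) + c.length by omega, cw_add_length]
  set mstar := (s + 1) / 2 with hmstar
  have hcase : 2 * mstar = s ∨ 2 * mstar = s + 1 := by omega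
  have hMle : M ≤ mstar := by omega
  rcases hcase with hcs | hcs
  · have := hext mstar hMle (by omega)
    rw [show s - mstar = mstar by omega] at this
    exact ne_neg_self _ this
  · have hm1 : 1 ≤ mstar := by omega
    have hthis := hext mstar hMle (by omega)
    rw [show s - mstar = mstar - 1 by omega] at hthis
    have hadj := cw_adj c hc hcc (mstar - 1)
    rw [show mstar - 1 + 1 = mstar by omega] at hadj
    exact hadj hthis

/- ----------  peeling a pure periodic segment ---------- -/

lemma segpeel (c : List Letter) (hc : c ≠ []) (hcc : Rd (c ++ c)) :
    ∀ a i k, k ≤ c.length → k ≤ i →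
    (∀ m, i - k ≤ m → m < i → cw c m = neg (cw c (2 * i + a - 1 - m))) →
    a ≤ cycLength (FreeGroup.mk (seg c i a)) + 2 * (c.length - k) := by
  intro a
  induction a using Nat.strong_induction_on with
  | _ a iha =>
    intro i k hk hki hcondk
    by_cases hsmall : a ≤ 2 * (c.length - k)
    · exact le_trans hsmall (Nat.le_add_left _ _)
    push_neg at hsmall
    by_cases hkl : k = c.length
    · exfalso
      apply par c hc hcc (i - k) (2 * i + a - 1) (by omega)
      intro m h1 h2
      exact hcondk m h1 (by omega)
    have hklt : k < c.length := lt_of_le_of_ne hk hkl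
    have ha2 : 2 ≤ a := by omega
    by_cases hpeel : cw c i = neg (cw c (i + a - 1))
    · -- peel one letter from each end
      have hlast : cw c ((i + 1) + (a - 2)) = neg (cw c i) := by
        rw [show (i + 1) + (a - 2) = i + a - 1 by omega, hpeel, neg_neg]
      have hseg : seg c i a = cw c i :: (seg c (i + 1) (a - 2) ++ [neg (cw c i)]) := by
        conv_lhs => rw [show a = (a - 1) + 1 by omega]
        rw [seg_succ_left]
        congr 1
        rw [show a - 1 = (a - 2) + 1 by omega, seg_succ_right, hlast]
      have helt : FreeGroup.mk (seg c i a)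
          = FreeGroup.mk [cw c i] * FreeGroup.mk (seg c (i + 1) (a - 2))
            * (FreeGroup.mk [cw c i])⁻¹ := by
        rw [FreeGroup.inv_mk, invRev_singleton, FreeGroup.mul_mk, FreeGroup.mul_mk, hseg]
        congr 1 <;> simp
      have hcyc : cycLength (FreeGroup.mk (seg c i a))
          = cycLength (FreeGroup.mk (seg c (i + 1) (a - 2))) := by
        rw [helt, cycLength_conj]
      rw [hcyc]
      have hcond' : ∀ m, (i + 1) - (k + 1) ≤ m → m < i + 1 →
          cw c m = neg (cw c (2 * (i + 1) + (a - 2) - 1 - m)) := by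
        intro m h1 h2
        by_cases hm : m = i
        · rw [hm, show 2 * (i + 1) + (a - 2) - 1 - i = i + a - 1 by omega]
          exact hpeel
        · have := hcondk m (by omega) (by omega)
          rwa [show 2 * i + a - 1 - m = 2 * (i + 1) + (a - 2) - 1 - m by omega] at this
      have hrec := iha (a - 2) (by omega) (i + 1) (k + 1) (by omega) (by omega) hcond'
      omega
    · -- cannot peel : the segment is cyclically reduced
      have ha1 : 1 ≤ a := by omega
      have hWW : Rd (seg c i a ++ seg c i a) := by
        refine (rd_seg c hc hcc i a).append (rd_seg c hc hcc i a) ?_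
        intro p hp q hq
        have hseg1 : seg c i a = seg c i (a - 1) ++ [cw c (i + (a - 1))] := by
          conv_lhs => rw [show a = (a - 1) + 1 by omega]
          rw [seg_succ_right]
        have hseg2 : seg c i a = cw c i :: seg c (i + 1) (a - 1) := by
          conv_lhs => rw [show a = (a - 1) + 1 by omega]
          rw [seg_succ_left]
        rw [hseg1, List.getLast?_concat, Option.mem_def, Option.some_inj] at hp
        rw [hseg2, List.head?_cons, Option.mem_def, Option.some_inj] at hq
        subst hp; subst hq
        rw [show i + (a - 1) = i + a - 1 by omega]
        exact fun hcontra => hpeel hcontra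
      rw [cycLength_eq_of_unpeelable hWW, length_seg]
      omega

/- ----------  peeling a segment with garbage at the end ---------- -/

lemma mix (c : List Letter) (hc : c ≠ []) (hcc : Rd (c ++ c)) :
    ∀ (r : List Letter), ∀ a i, Rd (seg c i a ++ r) →
    a ≤ cycLength (FreeGroup.mk (seg c i a ++ r)) + r.length + 2 * c.length := by
  intro r
  induction r using List.reverseRecOn with
  | nil =>
    intro a i _
    have := segpeel c hc hcc a i 0 (Nat.zero_le _) (Nat.zero_le _) (by intro m h1 h2; omega)
    simp only [List.append_nil]
    omega
  | append_singleton r' z ihr =>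
    intro a i hrd
    rcases Nat.eq_zero_or_pos a with ha | ha
    · subst ha
      exact Nat.zero_le _
    by_cases hpeel : cw c i = neg z
    · have hz : z = neg (cw c i) := by rw [hpeel, neg_neg]
      have hW : seg c i a ++ (r' ++ [z])
          = cw c i :: ((seg c (i + 1) (a - 1) ++ r') ++ [neg (cw c i)]) := by
        conv_lhs => rw [show a = (a - 1) + 1 by omega, seg_succ_left, hz]
        simp
      have helt : FreeGroup.mk (seg c i a ++ (r' ++ [z]))
          = FreeGroup.mk [cw c i] * FreeGroup.mk (seg c (i + 1) (a - 1) ++ r')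
            * (FreeGroup.mk [cw c i])⁻¹ := by
        rw [FreeGroup.inv_mk, invRev_singleton, FreeGroup.mul_mk, FreeGroup.mul_mk, hW]
        congr 1 <;> simp
      have hrd' : Rd (seg c (i + 1) (a - 1) ++ r') := by
        refine hrd.infix ⟨[cw c i], [neg (cw c i)], ?_⟩
        rw [hW]
        simp
      have hcyc : cycLength (FreeGroup.mk (seg c i a ++ (r' ++ [z])))
          = cycLength (FreeGroup.mk (seg c (i + 1) (a - 1) ++ r')) := by
        rw [helt, cycLength_conj]
      have := ihr (a - 1) (i + 1) hrd'
      rw [hcyc]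
      simp only [List.length_append, List.length_singleton]
      omega
    · have hWW : Rd ((seg c i a ++ (r' ++ [z])) ++ (seg c i a ++ (r' ++ [z]))) := by
        refine hrd.append hrd ?_
        intro p hp q hq
        have hseg2 : seg c i a = cw c i :: seg c (i + 1) (a - 1) := by
          conv_lhs => rw [show a = (a - 1) + 1 by omega]
          rw [seg_succ_left]
        rw [show seg c i a ++ (r' ++ [z]) = (seg c i a ++ r') ++ [z] by simp,
          List.getLast?_concat, Option.mem_def, Option.some_inj] at hp
        rw [hseg2, List.cons_append, List.head?_cons, Option.mem_def, Option.some_inj] at hq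
        subst hp; subst hq
        exact fun hcontra => hpeel hcontra
      rw [cycLength_eq_of_unpeelable hWW]
      simp only [List.length_append, length_seg, List.length_singleton]
      omega

/- ----------  the main combinatorial lower bound ---------- -/

lemma cyc_lower (c : List Letter) (hcc : Rd (c ++ c)) (d : FreeGroup (Fin 2)) (n : ℕ) :
    n * c.length ≤ cycLength ((FreeGroup.mk c) ^ n * d) + 2 * wordLength d + 2 * c.length := by
  rcases eq_or_ne c [] with rfl | hc
  · simp
  obtain ⟨A, B, S, e1, e2, hrdAB, hmk⟩ :=
    cancel_lemma (seg c 0 (n * c.length)) d.toWord (rd_seg c hc hcc 0 _) (rd_toWord d)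
  have hlen1 : n * c.length = A.length + S.length := by
    have := congrArg List.length e1
    simpa using this
  have hlen2 : wordLength d = S.length + B.length := by
    have := congrArg List.length e2
    rw [wordLength]
    simpa [FreeGroup.invRev_length] using this
  have hA : A = seg c 0 A.length := by
    have h1 : A = (seg c 0 (n * c.length)).take A.length := by
      rw [e1, List.take_left' rfl]
    conv_lhs => rw [h1, show n * c.length = A.length + (n * c.length - A.length) by omega,
      seg_append, List.take_left' (by simp)]
  have helt : (FreeGroup.mk c) ^ n * d = FreeGroup.mk (A ++ B) := by
    rw [pow_mk_eq_seg, ← hmk]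
    congr 1
    exact (FreeGroup.mk_toWord).symm
  have hmix := mix c hc hcc B A.length 0 (by rw [← hA]; exact hrdAB)
  rw [← hA] at hmix
  rw [helt]
  omega

/- ----------  cyclically reduced elements ---------- -/

lemma rd_cc_of_cyclicallyReduced {γ : FreeGroup (Fin 2)} (h : CyclicallyReduced γ) :
    Rd (γ.toWord ++ γ.toWord) := by
  rcases eq_or_ne γ.toWord [] with hnil | hne
  · rw [hnil]; exact rd_nil
  refine (rd_toWord γ).append (rd_toWord γ) ?_
  intro p hp q hq
  intro hcan
  -- hcan : q = neg p ; derive a shorter conjugate, contradiction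
  obtain ⟨t, hct⟩ : ∃ t, γ.toWord = q :: t := by
    rcases hw : γ.toWord with _ | ⟨q', t⟩
    · rw [hw] at hq; simp at hq
    · rw [hw, List.head?_cons, Option.mem_def, Option.some_inj] at hq
      exact ⟨t, by rw [hq]⟩
  have e0 : (FreeGroup.mk [q])⁻¹ * γ * ((FreeGroup.mk [q])⁻¹)⁻¹
      = FreeGroup.mk (t ++ [q]) := by
    rw [inv_inv, FreeGroup.inv_mk, invRev_singleton]
    conv_lhs => rw [← FreeGroup.mk_toWord (x := γ), hct]
    rw [FreeGroup.mul_mk, FreeGroup.mul_mk]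
    have e00 : ([neg q] ++ q :: t ++ [q]) = ([] : List Letter) ++ neg q :: neg (neg q) :: (t ++ [q]) := by
      simp
    rw [e00, mk_cancel]
    simp
  rcases t with _ | ⟨t0, t1⟩
  · -- γ.toWord = [q] : then p = q and q = neg q, impossible
    rw [hct, List.getLast?_singleton, Option.mem_def, Option.some_inj] at hp
    subst hp
    exact ne_neg_self _ hcan
  · -- t ≠ [] : p is the last letter of t0 :: t1
    have htne : (t0 :: t1) ≠ [] := List.cons_ne_nil _ _
    have hp' : p ∈ (t0 :: t1).getLast? := by
      rw [hct] at hp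
      rwa [show (q :: t0 :: t1).getLast? = (t0 :: t1).getLast? from rfl] at hp
    have hdecomp : (t0 :: t1) = (t0 :: t1).dropLast ++ [p] :=
      (List.dropLast_append_getLast? p hp').symm
    have e1 : FreeGroup.mk ((t0 :: t1) ++ [q]) = FreeGroup.mk ((t0 :: t1).dropLast) := by
      conv_lhs => rw [hdecomp]
      rw [hcan]
      rw [show ((t0 :: t1).dropLast ++ [p]) ++ [neg p]
        = (t0 :: t1).dropLast ++ p :: neg p :: [] by simp, mk_cancel]
      simp
    have hshort : wordLength ((FreeGroup.mk [q])⁻¹ * γ * ((FreeGroup.mk [q])⁻¹)⁻¹)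
        ≤ γ.toWord.length - 2 := by
      rw [e0, e1]
      calc wordLength (FreeGroup.mk ((t0 :: t1).dropLast))
          ≤ (t0 :: t1).dropLast.length := wordLength_mk_le _
        _ = γ.toWord.length - 2 := by
            rw [hct]
            simp
    have hcyc := cycLength_le γ ((FreeGroup.mk [q])⁻¹)
    have hlen2 : 2 ≤ γ.toWord.length := by
      rw [hct]
      simp
    have : cycLength γ = γ.toWord.length := by
      rw [← h, wordLength]
    omega

/- ----------  the Nielsen automorphism a ↦ aⁿb ---------- -/

def nielsenF (n : ℕ) : FreeGroup (Fin 2) →* FreeGroup (Fin 2) :=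
  FreeGroup.lift ![(FreeGroup.of 0) ^ n * FreeGroup.of 1, FreeGroup.of 0]

def nielsenG (n : ℕ) : FreeGroup (Fin 2) →* FreeGroup (Fin 2) :=
  FreeGroup.lift ![FreeGroup.of 1, ((FreeGroup.of 1) ^ n)⁻¹ * FreeGroup.of 0]

lemma nielsen_comp1 (n : ℕ) : (nielsenG n).comp (nielsenF n) = MonoidHom.id _ := by
  apply FreeGroup.ext_hom
  intro a
  fin_cases a <;>
    simp [nielsenF, nielsenG, map_mul, map_pow, mul_inv_cancel_left]

lemma nielsen_comp2 (n : ℕ) : (nielsenF n).comp (nielsenG n) = MonoidHom.id _ := by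
  apply FreeGroup.ext_hom
  intro a
  fin_cases a <;>
    simp [nielsenF, nielsenG, map_mul, map_pow, map_inv, inv_mul_cancel_left]

def nielsen (n : ℕ) : FreeGroup (Fin 2) ≃* FreeGroup (Fin 2) :=
  MonoidHom.toMulEquiv (nielsenF n) (nielsenG n) (nielsen_comp1 n) (nielsen_comp2 n)

lemma nielsen_apply_of0 (n : ℕ) :
    nielsen n (FreeGroup.of 0) = (FreeGroup.of 0) ^ n * FreeGroup.of 1 := by
  show nielsenF n (FreeGroup.of 0) = _
  simp [nielsenF]

lemma primitive_pow_mul {γ' : FreeGroup (Fin 2)} (φ' : FreeGroup (Fin 2) ≃* FreeGroup (Fin 2))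
    (h0 : φ' (FreeGroup.of 0) = γ') (n : ℕ) :
    Primitive (γ' ^ n * φ' (FreeGroup.of 1)) :=
  ⟨(nielsen n).trans φ', by
    rw [MulEquiv.trans_apply, nielsen_apply_of0, _root_.map_mul, _root_.map_pow, h0]⟩

/- ----------  elementary metric lemmas ---------- -/

lemma conj_pow_eq {G : Type*} [Group G] (a b : G) (n : ℕ) :
    (a * b * a⁻¹) ^ n = a * b ^ n * a⁻¹ := by
  induction n with
  | zero => simp
  | succ n ihn =>
    rw [pow_succ, ihn, pow_succ]
    group

lemma dist_subadd {X : Type*} [MetricSpace X] (ρ : FreeGroup (Fin 2) →* (X ≃ᵢ X)) (x₀ : X)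
    (w : FreeGroup (Fin 2)) (p q : ℕ) :
    dist ((ρ w ^ (p + q)) x₀) x₀ ≤ dist ((ρ w ^ p) x₀) x₀ + dist ((ρ w ^ q) x₀) x₀ := by
  have e : (ρ w ^ (p + q)) x₀ = (ρ w ^ p) ((ρ w ^ q) x₀) := by
    rw [pow_add, IsometryEquiv.mul_apply]
  rw [e]
  calc dist ((ρ w ^ p) ((ρ w ^ q) x₀)) x₀
      ≤ dist ((ρ w ^ p) ((ρ w ^ q) x₀)) ((ρ w ^ p) x₀) + dist ((ρ w ^ p) x₀) x₀ :=
        dist_triangle _ _ _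
    _ = dist ((ρ w ^ q) x₀) x₀ + dist ((ρ w ^ p) x₀) x₀ := by
        rw [IsometryEquiv.dist_eq]
    _ = _ := add_comm _ _

lemma dist_pow_le {X : Type*} [MetricSpace X] (ρ : FreeGroup (Fin 2) →* (X ≃ᵢ X)) (x₀ : X)
    (w : FreeGroup (Fin 2)) (m k : ℕ) :
    dist ((ρ w ^ (m * k)) x₀) x₀ ≤ (k : ℝ) * dist ((ρ w ^ m) x₀) x₀ := by
  induction k with
  | zero => simp
  | succ k ihk =>
    have h1 := dist_subadd ρ x₀ w (m * k) m
    rw [show m * (k + 1) = m * k + m by ring]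
    push_cast
    linarith

end BowditchAux

/-- If `l_S(ρ(γ)) ≥ ‖γ‖/C − D` for every primitive `γ ∈ F₂`, then in fact
`l_S(ρ(γ)) ≥ ‖γ‖/C` for every primitive `γ`: the additive constant can be removed. -/
theorem bowditch_growth_additive_constant_removal
    {X : Type*} [MetricSpace X]
    (ρ : FreeGroup (Fin 2) →* (X ≃ᵢ X)) (x₀ : X)
    (lS : FreeGroup (Fin 2) → ℝ)
    (hlS : ∀ γ : FreeGroup (Fin 2),
      Tendsto (fun n : ℕ => dist ((ρ γ ^ n) x₀) x₀ / n) atTop (𝓝 (lS γ)))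
    (C D : ℝ) (hC : 0 < C) (hD : 0 ≤ D)
    (hgrowth : ∀ γ : FreeGroup (Fin 2), Primitive γ → (cycLength γ : ℝ) / C - D ≤ lS γ) :
    ∀ γ : FreeGroup (Fin 2), Primitive γ → (cycLength γ : ℝ) / C ≤ lS γ := by
  classical
  intro γ hγprim
  have lS_nonneg : ∀ w, 0 ≤ lS w := by
    intro w
    refine ge_of_tendsto' (hlS w) ?_
    intro n
    positivity
  rcases Nat.eq_zero_or_pos (cycLength γ) with hz | hposℓ
  · rw [hz]
    simpa using lS_nonneg γ
  -- pass to a cyclically reduced conjugate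
  obtain ⟨h, hmin0⟩ := Nat.sInf_mem
    (Set.range_nonempty (fun g : FreeGroup (Fin 2) => wordLength (g * γ * g⁻¹)))
  have hmin : wordLength (h * γ * h⁻¹) = cycLength γ := hmin0
  set γ' := h * γ * h⁻¹ with hγ'def
  have hcycγ' : cycLength γ' = cycLength γ := by rw [hγ'def]; exact BowditchAux.cycLength_conj h γ
  have hCR : CyclicallyReduced γ' := by rw [CyclicallyReduced, hcycγ', hmin]
  set c := γ'.toWord with hcdef
  have hcc : BowditchAux.Rd (c ++ c) := BowditchAux.rd_cc_of_cyclicallyReduced hCR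
  have hclen : c.length = cycLength γ := hmin
  have hmkc : FreeGroup.mk c = γ' := FreeGroup.mk_toWord
  obtain ⟨φ, hφ⟩ := hγprim
  set φ' : FreeGroup (Fin 2) ≃* FreeGroup (Fin 2) := φ.trans (MulAut.conj h) with hφ'def
  have hφ'0 : φ' (FreeGroup.of 0) = γ' := by
    rw [hφ'def, MulEquiv.trans_apply, hφ, MulAut.conj_apply]
  set δ := φ' (FreeGroup.of 1) with hδdef
  -- conjugation invariance of the stable norm
  have hlSconj : lS γ' = lS γ := by
    set y := (ρ (h⁻¹)) x₀ with hydef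
    have hxy : (ρ h) y = x₀ := by
      rw [hydef, ← IsometryEquiv.mul_apply, ← _root_.map_mul]
      simp
    have hdist : ∀ n : ℕ, dist ((ρ γ' ^ n) x₀) x₀ = dist ((ρ γ ^ n) y) y := by
      intro n
      have e : ρ γ' ^ n = ρ h * ρ γ ^ n * ρ (h⁻¹) := by
        rw [hγ'def, _root_.map_mul, _root_.map_mul, _root_.map_inv,
          BowditchAux.conj_pow_eq, ← _root_.map_inv]
      rw [e, IsometryEquiv.mul_apply, IsometryEquiv.mul_apply]
      calc dist ((ρ h) ((ρ γ ^ n) ((ρ (h⁻¹)) x₀))) x₀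
          = dist ((ρ h) ((ρ γ ^ n) y)) ((ρ h) y) := by rw [hxy, hydef]
        _ = dist ((ρ γ ^ n) y) y := IsometryEquiv.dist_eq _ _ _
    have hbnd : ∀ n : ℕ, |dist ((ρ γ ^ n) y) y - dist ((ρ γ ^ n) x₀) x₀| ≤ 2 * dist y x₀ := by
      intro n
      have t1 : dist ((ρ γ ^ n) y) y
          ≤ dist ((ρ γ ^ n) x₀) x₀ + 2 * dist y x₀ := by
        calc dist ((ρ γ ^ n) y) y
            ≤ dist ((ρ γ ^ n) y) ((ρ γ ^ n) x₀) + dist ((ρ γ ^ n) x₀) x₀ + dist x₀ y :=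
              dist_triangle4 _ _ _ _
          _ = dist y x₀ + dist ((ρ γ ^ n) x₀) x₀ + dist x₀ y := by
              rw [IsometryEquiv.dist_eq]
          _ = dist ((ρ γ ^ n) x₀) x₀ + 2 * dist y x₀ := by
              rw [dist_comm x₀ y]; ring
      have t2 : dist ((ρ γ ^ n) x₀) x₀
          ≤ dist ((ρ γ ^ n) y) y + 2 * dist y x₀ := by
        calc dist ((ρ γ ^ n) x₀) x₀
            ≤ dist ((ρ γ ^ n) x₀) ((ρ γ ^ n) y) + dist ((ρ γ ^ n) y) y + dist y x₀ :=
              dist_triangle4 _ _ _ _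
          _ = dist x₀ y + dist ((ρ γ ^ n) y) y + dist y x₀ := by
              rw [IsometryEquiv.dist_eq]
          _ = dist ((ρ γ ^ n) y) y + 2 * dist y x₀ := by
              rw [dist_comm x₀ y]; ring
      rw [abs_le]
      constructor <;> linarith
    have hz : Tendsto (fun n : ℕ => (dist ((ρ γ ^ n) y) y - dist ((ρ γ ^ n) x₀) x₀) / n)
        atTop (𝓝 0) := by
      refine squeeze_zero_norm (a := fun n : ℕ => 2 * dist y x₀ / n) ?_
        (tendsto_const_div_atTop_nhds_zero_nat _)
      intro n
      rcases Nat.eq_zero_or_pos n with hn | hn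
      · subst hn; simp
      · have hn' : (0:ℝ) < n := by exact_mod_cast hn
        rw [Real.norm_eq_abs, abs_div, abs_of_nonneg (le_of_lt hn')]
        exact div_le_div_of_nonneg_right (hbnd n) hn'.le
    have h1 : Tendsto (fun n : ℕ => dist ((ρ γ ^ n) y) y / n) atTop (𝓝 (lS γ)) := by
      have hsum := hz.add (hlS γ)
      rw [zero_add] at hsum
      refine hsum.congr ?_
      intro n
      ring
    have h2 : Tendsto (fun n : ℕ => dist ((ρ γ' ^ n) x₀) x₀ / n) atTop (𝓝 (lS γ)) := by
      refine h1.congr ?_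
      intro n
      rw [hdist n]
    exact tendsto_nhds_unique (hlS γ') h2
  -- the stable norm is at most the displacement
  have lS_le_dist : ∀ w, lS w ≤ dist (ρ w x₀) x₀ := by
    intro w
    refine le_of_tendsto' (hlS w) ?_
    intro n
    rcases Nat.eq_zero_or_pos n with hn | hn
    · subst hn; simp [dist_nonneg]
    · have hn' : (0:ℝ) < n := by exact_mod_cast hn
      rw [div_le_iff₀ hn']
      have hp := BowditchAux.dist_pow_le ρ x₀ w 1 n
      rw [one_mul, pow_one] at hp
      calc dist ((ρ w ^ n) x₀) x₀ ≤ (n:ℝ) * dist (ρ w x₀) x₀ := hp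
        _ = dist (ρ w x₀) x₀ * n := mul_comm _ _
  -- the ε-approximation argument
  have main : ∀ ε : ℝ, 0 < ε → (cycLength γ : ℝ) / C ≤ lS γ + ε := by
    intro ε hε
    have hev : ∀ᶠ n : ℕ in atTop, dist ((ρ γ' ^ n) x₀) x₀ / n < lS γ' + ε :=
      (hlS γ').eventually (gt_mem_nhds (by linarith))
    obtain ⟨m, hm1, hm2⟩ := ((eventually_ge_atTop 1).and hev).exists
    have hmpos : (0:ℝ) < m := by exact_mod_cast hm1
    have hm2' : dist ((ρ γ' ^ m) x₀) x₀ ≤ (m:ℝ) * (lS γ' + ε) := by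
      rw [div_lt_iff₀ hmpos] at hm2
      calc dist ((ρ γ' ^ m) x₀) x₀ ≤ (lS γ' + ε) * m := le_of_lt hm2
        _ = (m:ℝ) * (lS γ' + ε) := mul_comm _ _
    by_contra hcon
    push_neg at hcon
    have hBpos : (0:ℝ) < (cycLength γ : ℝ) - (lS γ + ε) * C := by
      have := (lt_div_iff₀ hC).mp hcon
      linarith
    set B : ℝ := (cycLength γ : ℝ) - (lS γ + ε) * C with hBdef
    set Q : ℕ := 2 * wordLength δ + 2 * c.length with hQdef
    set R1 : ℝ := dist (ρ δ x₀) x₀ * C + D * C + (Q:ℝ) with hR1def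
    obtain ⟨k₀, hk₀⟩ := exists_nat_gt (R1 / (B * m))
    set k := k₀ + 1 with hkdef
    have hkR : R1 / (B * m) < (k:ℝ) := by
      calc R1 / (B * m) < (k₀:ℝ) := hk₀
        _ ≤ (k:ℝ) := by exact_mod_cast Nat.le_succ k₀
    set w := γ' ^ (m * k) * δ with hwdef
    have hwprim : Primitive w := by
      rw [hwdef, hδdef]
      exact BowditchAux.primitive_pow_mul φ' hφ'0 (m * k)
    have hcomb : (m * k) * c.length ≤ cycLength w + Q := by
      have hcl := BowditchAux.cyc_lower c hcc δ (m * k)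
      rw [hmkc] at hcl
      rw [hwdef, hQdef]
      omega
    have hr1 : ((m:ℝ) * (k:ℝ)) * (cycLength γ : ℝ) ≤ (cycLength w : ℝ) + (Q:ℝ) := by
      rw [← hclen]
      exact_mod_cast hcomb
    have hlSw : lS w ≤ dist (ρ δ x₀) x₀ + ((m:ℝ) * (k:ℝ)) * (lS γ + ε) := by
      have h1 := lS_le_dist w
      have h2 : dist (ρ w x₀) x₀
          ≤ dist (ρ δ x₀) x₀ + dist ((ρ γ' ^ (m * k)) x₀) x₀ := by
        rw [hwdef, _root_.map_mul, _root_.map_pow, IsometryEquiv.mul_apply]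
        calc dist ((ρ γ' ^ (m * k)) ((ρ δ) x₀)) x₀
            ≤ dist ((ρ γ' ^ (m * k)) ((ρ δ) x₀)) ((ρ γ' ^ (m * k)) x₀)
              + dist ((ρ γ' ^ (m * k)) x₀) x₀ := dist_triangle _ _ _
          _ = dist ((ρ δ) x₀) x₀ + dist ((ρ γ' ^ (m * k)) x₀) x₀ := by
              rw [IsometryEquiv.dist_eq]
      have h3 := BowditchAux.dist_pow_le ρ x₀ γ' m k
      have h4 : (k:ℝ) * dist ((ρ γ' ^ m) x₀) x₀ ≤ (k:ℝ) * ((m:ℝ) * (lS γ' + ε)) :=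
        mul_le_mul_of_nonneg_left hm2' (by positivity)
      have h5 : (k:ℝ) * ((m:ℝ) * (lS γ' + ε)) = ((m:ℝ) * (k:ℝ)) * (lS γ + ε) := by
        rw [hlSconj]; ring
      linarith
    have hgr := hgrowth w hwprim
    have hr2 : (cycLength w : ℝ) ≤ (lS w + D) * C := by
      have hgr' : (cycLength w : ℝ) / C ≤ lS w + D := by linarith
      calc (cycLength w : ℝ) = (cycLength w : ℝ) / C * C := by field_simp
        _ ≤ (lS w + D) * C := mul_le_mul_of_nonneg_right hgr' (le_of_lt hC)
    have hchain : ((m:ℝ) * (k:ℝ)) * (cycLength γ : ℝ)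
        ≤ (dist (ρ δ x₀) x₀ + ((m:ℝ) * (k:ℝ)) * (lS γ + ε) + D) * C + (Q:ℝ) := by
      have h6 : (lS w + D) * C
          ≤ (dist (ρ δ x₀) x₀ + ((m:ℝ) * (k:ℝ)) * (lS γ + ε) + D) * C :=
        mul_le_mul_of_nonneg_right (by linarith) (le_of_lt hC)
      linarith
    have hfinal : ((m:ℝ) * (k:ℝ)) * B ≤ R1 := by
      rw [hBdef, hR1def]
      nlinarith [hchain]
    have hcontra : R1 < ((m:ℝ) * (k:ℝ)) * B := by
      rw [div_lt_iff₀ (by positivity : (0:ℝ) < B * m)] at hkR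
      calc R1 < (k:ℝ) * (B * m) := hkR
        _ = ((m:ℝ) * (k:ℝ)) * B := by ring
    linarith
  by_contra hfin
  push_neg at hfin
  have := main ((cycLength γ / C - lS γ) / 2) (by linarith)
  linarith
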